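/- Let c > 0, h > 0, and set x₁ = 0, x₂ = (0,r₂,0), x₃ = (0,r₃,0), x₄ = (r₄,0,0), x₅ = (r₅,0,0), x₆ = (0,0,h), x₇ = (0,0,−h), where r₂, r₃ are distinct and nonzero and r₄, r₅ are distinct and nonzero. Suppose a, ã ∈ ℝ³ and t, t̃ ∈ ℝ satisfy t + c⁻¹‖x_k − a‖ = t̃ + c⁻¹‖x_k − ã‖ for all k = 1,…,7. Then a = ã and t = t̃. -/

import Mathlib

lemma sq_expand (i : Fin 3) (r : ℝ) (b : EuclideanSpace ℝ (Fin 3)) :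
    ‖EuclideanSpace.single i r - b‖^2 = r^2 - 2*r*(b i) + ‖b‖^2 := by
  rw [norm_sub_sq_real]
  simp [EuclideanSpace.norm_single, EuclideanSpace.inner_single_left, sq_abs]
  ring

lemma norm_sq_coords (b : EuclideanSpace ℝ (Fin 3)) :
    ‖b‖^2 = b 0^2 + b 1^2 + b 2^2 := by
  rw [← real_inner_self_eq_norm_sq]
  simp only [PiLp.inner_apply, Fin.sum_univ_three, RCLike.inner_apply, conj_trivial]
  ring

lemma axis_key (s u v A ai N eu ev : ℝ) (hs : s ≠ 0) (hu : u ≠ 0) (hv : v ≠ 0)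
    (huv : u ≠ v)
    (hsu : s*eu = u*A + s*N) (hsv : s*ev = v*A + s*N)
    (equ : eu^2 = u^2 - 2*u*ai + N^2) (eqv : ev^2 = v^2 - 2*v*ai + N^2) :
    ai^2 = N^2 := by
  have Pu : s^2*(u^2 - 2*u*ai + N^2) = (u*A + s*N)^2 := by
    linear_combination (s*eu + u*A + s*N) * hsu - s^2 * equ
  have Pv : s^2*(v^2 - 2*v*ai + N^2) = (v*A + s*N)^2 := by
    linear_combination (s*ev + v*A + s*N) * hsv - s^2 * eqv
  have h1 : s^2*u - 2*s^2*ai - u*A^2 - 2*A*s*N = 0 := by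
    have hq : u * (s^2*u - 2*s^2*ai - u*A^2 - 2*A*s*N) = 0 := by
      linear_combination Pu
    exact (mul_eq_zero.mp hq).resolve_left hu
  have h2 : s^2*v - 2*s^2*ai - v*A^2 - 2*A*s*N = 0 := by
    have hq : v * (s^2*v - 2*s^2*ai - v*A^2 - 2*A*s*N) = 0 := by
      linear_combination Pv
    exact (mul_eq_zero.mp hq).resolve_left hv
  have hAsq : A^2 = s^2 := by
    have hq : (u - v) * (s^2 - A^2) = 0 := by linear_combination h1 - h2
    have := (mul_eq_zero.mp hq).resolve_left (sub_ne_zero.mpr huv)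
    linarith
  have hai : s * (s*ai + A*N) = 0 := by
    linear_combination (-(1:ℝ)/2)*h1 - (u/2)*hAsq
  have hai' : s*ai + A*N = 0 := (mul_eq_zero.mp hai).resolve_left hs
  have hq : s^2 * (ai^2 - N^2) = 0 := by linear_combination (s*ai - A*N)*hai' + N^2*hAsq
  have := (mul_eq_zero.mp hq).resolve_left (pow_ne_zero 2 hs)
  linarith

set_option maxHeartbeats 1000000 in
theorem seven_point_uniqueness
    (c h r₂ r₃ r₄ r₅ : ℝ) (hc : 0 < c) (hh : 0 < h)
    (h23 : r₂ ≠ r₃) (h2 : r₂ ≠ 0) (h3 : r₃ ≠ 0)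
    (h45 : r₄ ≠ r₅) (h4 : r₄ ≠ 0) (h5 : r₅ ≠ 0)
    (x : Fin 7 → EuclideanSpace ℝ (Fin 3))
    (hx1 : x 0 = 0)
    (hx2 : x 1 = EuclideanSpace.single 1 r₂)
    (hx3 : x 2 = EuclideanSpace.single 1 r₃)
    (hx4 : x 3 = EuclideanSpace.single 0 r₄)
    (hx5 : x 4 = EuclideanSpace.single 0 r₅)
    (hx6 : x 5 = EuclideanSpace.single 2 h)
    (hx7 : x 6 = EuclideanSpace.single 2 (-h))
    (a a' : EuclideanSpace ℝ (Fin 3)) (t t' : ℝ)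
    (hEq : ∀ k, t + c⁻¹ * ‖x k - a‖ = t' + c⁻¹ * ‖x k - a'‖) :
    a = a' ∧ t = t' := by
  have hc' : c ≠ 0 := ne_of_gt hc
  have hd : ∀ k, ‖x k - a‖ = ‖x k - a'‖ + c * (t' - t) := by
    intro k
    have hk := hEq k
    field_simp at hk
    nlinarith [hk]
  have E0 : ‖a‖ = ‖a'‖ + c * (t' - t) := by
    have := hd 0
    rwa [hx1, zero_sub, zero_sub, norm_neg, norm_neg] at this
  have G : ∀ (i : Fin 3) (r : ℝ),
      ‖EuclideanSpace.single i r - a‖ = ‖EuclideanSpace.single i r - a'‖ + c * (t' - t) →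
      2*(c*(t'-t))*‖EuclideanSpace.single i r - a'‖ + (c*(t'-t))^2
        = 2*r*(a' i - a i) + (‖a‖^2 - ‖a'‖^2) := by
    intro i r hdr
    have h1 := sq_expand i r a
    have h2 := sq_expand i r a'
    have h3 : ‖EuclideanSpace.single i r - a‖^2
        = (‖EuclideanSpace.single i r - a'‖ + c*(t'-t))^2 := by rw [hdr]
    linear_combination h1 - h2 - h3
  have G2 := G 1 r₂ (by have := hd 1; rwa [hx2] at this)
  have G3 := G 1 r₃ (by have := hd 2; rwa [hx3] at this)
  have G4 := G 0 r₄ (by have := hd 3; rwa [hx4] at this)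
  have G5 := G 0 r₅ (by have := hd 4; rwa [hx5] at this)
  have G6 := G 2 h (by have := hd 5; rwa [hx6] at this)
  have G7 := G 2 (-h) (by have := hd 6; rwa [hx7] at this)
  rcases eq_or_ne (c*(t'-t)) 0 with hs0 | hs0
  · -- s = 0 case
    have ht : t = t' := by
      rcases mul_eq_zero.mp hs0 with hz | hz
      · exact absurd hz hc'
      · linarith
    have hN : ‖a‖ = ‖a'‖ := by rw [E0, hs0, add_zero]
    have hC : ‖a‖^2 - ‖a'‖^2 = 0 := by rw [hN]; ring
    rw [hs0, hC] at G2 G4 G6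
    have e1 : a' 1 = a 1 := by
      have hq : r₂ * (2*(a' 1 - a 1)) = 0 := by linarith
      have := (mul_eq_zero.mp hq).resolve_left h2
      linarith
    have e0 : a' 0 = a 0 := by
      have hq : r₄ * (2*(a' 0 - a 0)) = 0 := by linarith
      have := (mul_eq_zero.mp hq).resolve_left h4
      linarith
    have e2 : a' 2 = a 2 := by
      have hq : h * (2*(a' 2 - a 2)) = 0 := by linarith
      have := (mul_eq_zero.mp hq).resolve_left (ne_of_gt hh)
      linarith
    refine ⟨?_, ht⟩
    ext i
    fin_cases i
    · exact e0.symm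
    · exact e1.symm
    · exact e2.symm
  · -- s ≠ 0 case: derive a contradiction
    exfalso
    have hC : ‖a‖^2 - ‖a'‖^2 = 2*(c*(t'-t))*‖a'‖ + (c*(t'-t))^2 := by
      rw [E0]; ring
    have hy : (a' 1)^2 = ‖a'‖^2 := by
      refine axis_key (c*(t'-t)) r₂ r₃ (a' 1 - a 1) (a' 1) ‖a'‖
        ‖EuclideanSpace.single 1 r₂ - a'‖ ‖EuclideanSpace.single 1 r₃ - a'‖
        hs0 h2 h3 h23 (by rw [hC] at G2; linarith) (by rw [hC] at G3; linarith)
        (sq_expand 1 r₂ a') (sq_expand 1 r₃ a')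
    have hxx : (a' 0)^2 = ‖a'‖^2 := by
      refine axis_key (c*(t'-t)) r₄ r₅ (a' 0 - a 0) (a' 0) ‖a'‖
        ‖EuclideanSpace.single 0 r₄ - a'‖ ‖EuclideanSpace.single 0 r₅ - a'‖
        hs0 h4 h5 h45 (by rw [hC] at G4; linarith) (by rw [hC] at G5; linarith)
        (sq_expand 0 r₄ a') (sq_expand 0 r₅ a')
    have hsum : ‖a'‖^2 = a' 0^2 + a' 1^2 + a' 2^2 := norm_sq_coords a'
    have hN0 : ‖a'‖ = 0 := by
      have hNnn : (0:ℝ) ≤ ‖a'‖ := norm_nonneg a'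
      nlinarith [sq_nonneg (a' 2)]
    have ha'0 : a' = 0 := norm_eq_zero.mp hN0
    have e6 : ‖EuclideanSpace.single 2 h - a'‖ = h := by
      rw [ha'0, sub_zero, EuclideanSpace.norm_single]
      exact Real.norm_of_nonneg hh.le
    have e7nn : (0:ℝ) ≤ ‖EuclideanSpace.single 2 (-h) - a'‖ := norm_nonneg _
    rw [hC, hN0] at G6 G7
    have hsum2 : (c*(t'-t)) * (‖EuclideanSpace.single 2 h - a'‖
        + ‖EuclideanSpace.single 2 (-h) - a'‖) = 0 := by linarith
    have := (mul_eq_zero.mp hsum2).resolve_left hs0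
    rw [e6] at this
    linarith
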